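/- Let (f_n)_{n ≥ n_δ} be maps on [0,∞) that are contractions with coefficients q_n ∈ (0,1) satisfying ∏_{k=n_δ+1}^n q_k → 0 as n → ∞, and with fixed points x_n^* satisfying ∑_n |x_{n+1}^* - x_n^*| < ∞ and x_n^* → θ̃. If g_n = f_n(g_{n-1}) for n > n_δ, then g_n → θ̃. -/

import Mathlib

/-- Fixed-point tracking for iterated contractions: if `f n` are self-maps of `[0,∞)`
that are contractions with coefficients `q n` whose products vanish, with fixed
points `xs n` such that `∑ |xs (n+1) - xs n| < ∞` and `xs n → θ̃`, then any orbit
`g n = f n (g (n-1))` converges to `θ̃`. -/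
theorem contraction_fixed_point_tracking (f : ℕ → ℝ → ℝ) (q xs g : ℕ → ℝ)
    (θt : ℝ) (nδ : ℕ)
    (hq : ∀ n, 0 < q n ∧ q n < 1)
    (hmap : ∀ n, ∀ x : ℝ, 0 ≤ x → 0 ≤ f n x)
    (hcontr : ∀ n, ∀ x y : ℝ, 0 ≤ x → 0 ≤ y → |f n x - f n y| ≤ q n * |x - y|)
    (hprod : Filter.Tendsto (fun n => ∏ k ∈ Finset.Icc (nδ + 1) n, q k)
      Filter.atTop (nhds 0))
    (hfix : ∀ n, 0 ≤ xs n ∧ f n (xs n) = xs n)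
    (hsum : Summable (fun n => |xs (n + 1) - xs n|))
    (hxs : Filter.Tendsto xs Filter.atTop (nhds θt))
    (hg0 : 0 ≤ g nδ)
    (hgrec : ∀ n ≥ nδ, g (n + 1) = f (n + 1) (g n)) :
    Filter.Tendsto g Filter.atTop (nhds θt) := by
  set d : ℕ → ℝ := fun n => |xs (n + 1) - xs n| with hd
  set e : ℕ → ℝ := fun n => |g n - xs n| with he
  have hdnn : ∀ n, 0 ≤ d n := fun n => abs_nonneg _
  have henn : ∀ n, 0 ≤ e n := fun n => abs_nonneg _
  -- nonnegativity of the orbit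
  have hgpos : ∀ n, nδ ≤ n → 0 ≤ g n := by
    intro n hn
    induction n with
    | zero => exact Nat.le_zero.mp hn ▸ hg0
    | succ n ih =>
      rcases Nat.lt_or_ge nδ (n + 1) with h | h
      · have hn' : nδ ≤ n := Nat.lt_succ_iff.mp h
        rw [hgrec n hn']
        exact hmap (n + 1) (g n) (ih hn')
      · have : nδ = n + 1 := le_antisymm hn h
        exact this ▸ hg0
  -- one-step error bound
  have hestep : ∀ n, nδ ≤ n → e (n + 1) ≤ q (n + 1) * e n + d n := by
    intro n hn
    have h1 : e (n + 1) = |f (n + 1) (g n) - f (n + 1) (xs (n + 1))| := by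
      simp only [he, hgrec n hn, (hfix (n + 1)).2]
    have h2 : |f (n + 1) (g n) - f (n + 1) (xs (n + 1))| ≤ q (n + 1) * |g n - xs (n + 1)| :=
      hcontr (n + 1) _ _ (hgpos n hn) (hfix (n + 1)).1
    have h3 : |g n - xs (n + 1)| ≤ e n + d n := by
      have : g n - xs (n + 1) = (g n - xs n) + -(xs (n + 1) - xs n) := by ring
      rw [this]
      exact (abs_add_le _ _).trans (by rw [abs_neg])
    have hq1 := hq (n + 1)
    have h4 : q (n + 1) * |g n - xs (n + 1)| ≤ q (n + 1) * (e n + d n) :=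
      mul_le_mul_of_nonneg_left h3 hq1.1.le
    nlinarith [hdnn n, henn n]
  -- unrolled bound
  have hbound : ∀ N, nδ ≤ N → ∀ n, N ≤ n →
      e n ≤ (∏ j ∈ Finset.Ioc N n, q j) * e N + ∑ k ∈ Finset.Ico N n, d k := by
    intro N hN n hn
    induction n, hn using Nat.le_induction with
    | base => simp
    | succ n hn ih =>
      have hq1 := hq (n + 1)
      have hPnn : 0 ≤ ∏ j ∈ Finset.Ioc N n, q j :=
        Finset.prod_nonneg fun j _ => (hq j).1.le
      have hSnn : 0 ≤ ∑ k ∈ Finset.Ico N n, d k :=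
        Finset.sum_nonneg fun k _ => hdnn k
      have hIoc : Finset.Ioc N (n + 1) = insert (n + 1) (Finset.Ioc N n) := by
        ext x; simp only [Finset.mem_Ioc, Finset.mem_insert]; omega
      have hIco : Finset.Ico N (n + 1) = insert n (Finset.Ico N n) := by
        ext x; simp only [Finset.mem_Ico, Finset.mem_insert]; omega
      have hstep := hestep n (hN.trans hn)
      have h5 : q (n + 1) * e n ≤ q (n + 1) * ((∏ j ∈ Finset.Ioc N n, q j) * e N
          + ∑ k ∈ Finset.Ico N n, d k) := mul_le_mul_of_nonneg_left ih hq1.1.le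
      rw [hIoc, hIco, Finset.prod_insert (by simp), Finset.sum_insert (by simp)]
      nlinarith [henn N, henn n, hdnn n]
  -- products over Ioc N n tend to 0 for each fixed N ≥ nδ
  have hprod' : Filter.Tendsto (fun n => ∏ k ∈ Finset.Ioc nδ n, q k)
      Filter.atTop (nhds 0) := by
    simpa only [Finset.Icc_add_one_left_eq_Ioc] using hprod
  have hPtend : ∀ N, nδ ≤ N →
      Filter.Tendsto (fun n => ∏ j ∈ Finset.Ioc N n, q j) Filter.atTop (nhds 0) := by
    intro N hN
    have hc : (0:ℝ) < ∏ j ∈ Finset.Ioc nδ N, q j :=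
      Finset.prod_pos fun j _ => (hq j).1
    have h1 : Filter.Tendsto (fun n => (∏ k ∈ Finset.Ioc nδ n, q k) / ∏ j ∈ Finset.Ioc nδ N, q j)
        Filter.atTop (nhds 0) := by
      simpa using hprod'.div_const _
    refine h1.congr' ?_
    filter_upwards [Filter.eventually_ge_atTop N] with n hn
    rw [← Finset.prod_Ioc_consecutive q hN hn]
    field_simp
  -- error tends to 0
  have hetend : Filter.Tendsto e Filter.atTop (nhds 0) := by
    rw [Metric.tendsto_atTop]
    intro ε hε
    -- choose N with small tail sum
    have htail := tendsto_sum_nat_add (f := d)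
    rw [Metric.tendsto_atTop] at htail
    obtain ⟨N₀, hN₀⟩ := htail (ε / 2) (by linarith)
    set N := max N₀ nδ with hNdef
    have hNδ : nδ ≤ N := le_max_right _ _
    have htailN : ∑' k, d (k + N) < ε / 2 := by
      have := hN₀ N (le_max_left _ _)
      rw [Real.dist_eq, sub_zero] at this
      calc ∑' k, d (k + N) ≤ |∑' k, d (k + N)| := le_abs_self _
        _ < ε / 2 := this
    have hsumN : Summable (fun k => d (k + N)) := (summable_nat_add_iff N).mpr hsum
    have hfin : ∀ n, ∑ k ∈ Finset.Ico N n, d k ≤ ∑' k, d (k + N) := by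
      intro n
      rw [Finset.sum_Ico_eq_sum_range]
      calc ∑ i ∈ Finset.range (n - N), d (N + i)
          = ∑ i ∈ Finset.range (n - N), d (i + N) := by
            refine Finset.sum_congr rfl fun i _ => by rw [Nat.add_comm]
        _ ≤ ∑' k, d (k + N) := Summable.sum_le_tsum _ (fun k _ => hdnn _) hsumN
    -- choose M with small product
    have hP := hPtend N hNδ
    rw [Metric.tendsto_atTop] at hP
    obtain ⟨M, hM⟩ := hP (ε / 2 / (e N + 1)) (by positivity)
    refine ⟨max M N, fun n hn => ?_⟩
    have hnN : N ≤ n := le_trans (le_max_right _ _) hn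
    have hnM : M ≤ n := le_trans (le_max_left _ _) hn
    have hPn : ∏ j ∈ Finset.Ioc N n, q j < ε / 2 / (e N + 1) := by
      have := hM n hnM
      rw [Real.dist_eq, sub_zero] at this
      calc ∏ j ∈ Finset.Ioc N n, q j ≤ |∏ j ∈ Finset.Ioc N n, q j| := le_abs_self _
        _ < _ := this
    have hPe : (∏ j ∈ Finset.Ioc N n, q j) * e N < ε / 2 := by
      have h1 : (∏ j ∈ Finset.Ioc N n, q j) * e N ≤ (∏ j ∈ Finset.Ioc N n, q j) * (e N + 1) := by
        have hPnn : 0 ≤ ∏ j ∈ Finset.Ioc N n, q j :=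
          Finset.prod_nonneg fun j _ => (hq j).1.le
        nlinarith
      have h2 : (∏ j ∈ Finset.Ioc N n, q j) * (e N + 1) < ε / 2 / (e N + 1) * (e N + 1) :=
        mul_lt_mul_of_pos_right hPn (by nlinarith [henn N])
      have h3 : ε / 2 / (e N + 1) * (e N + 1) = ε / 2 :=
        div_mul_cancel₀ _ (by nlinarith [henn N] : (e N + 1) ≠ 0)
      linarith
    have := hbound N hNδ n hnN
    rw [Real.dist_eq, sub_zero, abs_of_nonneg (henn n)]
    have := hfin n
    linarith [hbound N hNδ n hnN]
  -- conclude
  have hdiff : Filter.Tendsto (fun n => g n - xs n) Filter.atTop (nhds 0) := by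
    rw [tendsto_zero_iff_abs_tendsto_zero]
    exact hetend
  have := hdiff.add hxs
  simpa using this
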